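/- (Lower bound for shared-attention universal transformers.) Let d_in = 1. Suppose there exist matrices {R_V^{l,h} ∈ R^{m×m}}_{l∈[L],h∈[H]} such that: for every choice of scalars W_V^{l,h}, W_O^{l,h} ∈ R and every choice of row-stochastic matrices A^{l,h} ∈ R^{n×n} (for every n), there exist E ∈ R^{1×m} and U ∈ R^{m×1} with Σ_{(h_1,...,h_L)∈[H]^L} A^{L,h_L}···A^{1,h_1} X^0 (Π_{l=1}^L W_V^{l,h_l} W_O^{l,h_l}) = Σ_{(h_1,...,h_L)} A^{L,h_L}···A^{1,h_1} X^0 E R_V^{1,h_1}···R_V^{L,h_L} U for all X^0 ∈ R^{n×1} and all n. Then m ≥ H^{L/2}. -/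

import Mathlib

open Matrix

/-- A square matrix is row-stochastic if its entries are nonnegative and each
row sums to `1`. -/
def IsRowStochastic {n : ℕ} (M : Matrix (Fin n) (Fin n) ℝ) : Prop :=
  (∀ i j, 0 ≤ M i j) ∧ ∀ i, ∑ j, M i j = 1

/-- `A^{L,h_L} ⋯ A^{1,h_1}`: the attention matrices along the path `hs`,
multiplied in decreasing layer order. -/
def aPathRev {n H L : ℕ} (A : Fin L → Fin H → Matrix (Fin n) (Fin n) ℝ)
    (hs : Fin L → Fin H) : Matrix (Fin n) (Fin n) ℝ :=
  (List.ofFn fun l : Fin L => A l.rev (hs l.rev)).prod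

/-- `R_V^{1,h_1} ⋯ R_V^{L,h_L}`: the value-routing matrices along the path
`hs`, multiplied in increasing layer order. -/
def rPathProd {m H L : ℕ} (RV : Fin L → Fin H → Matrix (Fin m) (Fin m) ℝ)
    (hs : Fin L → Fin H) : Matrix (Fin m) (Fin m) ℝ :=
  (List.ofFn fun l : Fin L => RV l (hs l)).prod

namespace Stmt17Aux

def X0e (n : ℕ) : Matrix (Fin n) (Fin 1) ℝ := fun i _ => if (i : ℕ) = 0 then 1 else 0

def tA (n : ℕ) (b : Bool) : Matrix (Fin n) (Fin n) ℝ :=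
  fun i j => if (i : ℕ) = 0 ∧ 2 ≤ n then (if (j : ℕ) = (if b then 0 else 1) then 1 else 0)
    else if j = i then 1 else 0

lemma sum_ind (n c : ℕ) (hc : c < n) :
    ∑ j : Fin n, (if (j : ℕ) = c then (1:ℝ) else 0) = 1 := by
  have h : ∀ j : Fin n, ((j : ℕ) = c) = (j = ⟨c, hc⟩) := fun j => by
    simp [Fin.ext_iff]
  simp only [h]
  simp

lemma tA_stoch (n : ℕ) (b : Bool) : IsRowStochastic (tA n b) := by
  constructor
  · intro i j
    unfold tA; positivity
  · intro i
    unfold tA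
    by_cases hi : (i : ℕ) = 0 ∧ 2 ≤ n
    · simp only [hi, if_true]
      exact sum_ind n _ (by rcases hi with ⟨_, h2⟩; cases b <;> simp <;> omega)
    · simp only [hi, if_false]
      have h : ∀ j : Fin n, ((j = i) : Prop) = (j = i) := fun _ => rfl
      simp

lemma tA_mul (n : ℕ) (hn : 2 ≤ n) (b : Bool) :
    tA n b * X0e n = (if b then (1:ℝ) else 0) • X0e n := by
  have h0 : (0:ℕ) < n := by omega
  ext i k
  rw [Matrix.mul_apply]
  have hsum : ∀ j : Fin n, tA n b i j * X0e n j k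
      = if j = (⟨0, h0⟩ : Fin n) then tA n b i ⟨0, h0⟩ else 0 := by
    intro j
    unfold X0e
    by_cases hj : j = (⟨0, h0⟩ : Fin n)
    · subst hj; simp
    · have : ((j : ℕ) = 0) = False := by
        simp only [eq_iff_iff, iff_false]
        intro h; exact hj (Fin.ext h)
      simp [this, hj]
  rw [Finset.sum_congr rfl (fun j _ => hsum j), Finset.sum_ite_eq' Finset.univ]
  simp only [Finset.mem_univ, if_true]
  unfold tA X0e
  by_cases hi : (i : ℕ) = 0
  · simp only [hi, hn, and_true, if_true, smul_eq_mul]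
    cases b <;> simp [hi] <;> erw [Matrix.smul_apply] <;> simp [hi]
  · have : ((⟨0, h0⟩ : Fin n) = i) = False := by
      simp only [eq_iff_iff, iff_false]
      intro h; exact hi (by rw [← h])
    simp [hi, this]
    erw [Matrix.smul_apply]
    simp [hi]

lemma prod_mul (n : ℕ) (hn : 2 ≤ n) (bs : List Bool) :
    (bs.map (tA n)).prod * X0e n = (if bs.all id then (1:ℝ) else 0) • X0e n := by
  induction bs with
  | nil => simp
  | cons b bs ih =>
    rw [List.map_cons, List.prod_cons, Matrix.mul_assoc, ih, Matrix.mul_smul,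
      tA_mul n hn b, smul_smul]
    congr 1
    cases b <;> simp

end Stmt17Aux

/-- lower bound for shared-attention universal transformers,
`d_in = 1`: if fixed routing matrices `R_V^{l,h} ∈ ℝ^{m×m}` can reproduce, for
every choice of scalar value/output parameters and every family of
row-stochastic attention matrices (for every context length `n`), the target
path expansion via some embedding `E` and unembedding `U`, then `m ≥ H^{L/2}`. -/
theorem stmt17 {m H L : ℕ}
    (RV : Fin L → Fin H → Matrix (Fin m) (Fin m) ℝ)
    (huniv : ∀ (WV WO : Fin L → Fin H → ℝ)
        (A : (n : ℕ) → Fin L → Fin H → Matrix (Fin n) (Fin n) ℝ),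
        (∀ n l h, IsRowStochastic (A n l h)) →
        ∃ (E : Matrix (Fin 1) (Fin m) ℝ) (U : Matrix (Fin m) (Fin 1) ℝ),
          ∀ (n : ℕ) (X0 : Matrix (Fin n) (Fin 1) ℝ),
            ∑ hs : Fin L → Fin H,
              (∏ l : Fin L, WV l (hs l) * WO l (hs l)) • (aPathRev (A n) hs * X0) =
            ∑ hs : Fin L → Fin H,
              aPathRev (A n) hs * X0 * (E * rPathProd RV hs * U)) :
    (H : ℝ) ^ ((L : ℝ) / 2) ≤ (m : ℝ) := by
  classical
  have hm0 : (0:ℝ) ≤ (m:ℝ) := Nat.cast_nonneg m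
  have hH0 : (0:ℝ) ≤ (H:ℝ) := Nat.cast_nonneg H
  set e := Fintype.equivFin (Fin L → Fin H) with he
  -- Step 1: pathwise coefficient matching
  have key : ∀ WV WO : Fin L → Fin H → ℝ,
      ∃ (E : Matrix (Fin 1) (Fin m) ℝ) (U : Matrix (Fin m) (Fin 1) ℝ),
        ∀ hs0 : Fin L → Fin H,
          (∏ l, WV l (hs0 l) * WO l (hs0 l)) = (E * rPathProd RV hs0 * U) 0 0 := by
    intro WV WO
    set A : (n : ℕ) → Fin L → Fin H → Matrix (Fin n) (Fin n) ℝ :=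
      fun n l h => Stmt17Aux.tA n
        (if hp : n - 2 < Fintype.card (Fin L → Fin H)
          then decide (h = e.symm ⟨n - 2, hp⟩ l) else true) with hAdef
    obtain ⟨E, U, hEU⟩ := huniv WV WO A (fun n l h => Stmt17Aux.tA_stoch _ _)
    refine ⟨E, U, fun hs0 => ?_⟩
    set n := (e hs0 : ℕ) + 2 with hn
    have h2 : (2:ℕ) ≤ n := by omega
    have h0 : (0:ℕ) < n := by omega
    have hcard : n - 2 < Fintype.card (Fin L → Fin H) := by
      simpa [hn] using (e hs0).isLt
    have hdecode : e.symm ⟨n - 2, hcard⟩ = hs0 := by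
      have h : (⟨n - 2, hcard⟩ : Fin (Fintype.card (Fin L → Fin H))) = e hs0 := by
        apply Fin.ext; simp [hn]
      rw [h, Equiv.symm_apply_apply]
    have hA : ∀ (l : Fin L) (h : Fin H),
        A n l h = Stmt17Aux.tA n (decide (h = hs0 l)) := by
      intro l h
      simp only [hAdef, dif_pos hcard, hdecode]
    have hpath : ∀ hs : Fin L → Fin H,
        aPathRev (A n) hs * Stmt17Aux.X0e n
          = (if hs = hs0 then (1:ℝ) else 0) • Stmt17Aux.X0e n := by
      intro hs
      have h1 : aPathRev (A n) hs
          = ((List.ofFn fun l : Fin L => decide (hs l.rev = hs0 l.rev)).map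
              (Stmt17Aux.tA n)).prod := by
        unfold aPathRev
        rw [List.map_ofFn]
        exact congrArg _ (congrArg List.ofFn (funext fun l => hA l.rev (hs l.rev)))
      rw [h1, Stmt17Aux.prod_mul n h2]
      congr 1
      by_cases hh : hs = hs0
      · subst hh; simp
      · rw [if_neg hh, if_neg]
        intro hall
        apply hh
        funext l
        have hmem : (decide (hs l = hs0 l))
            ∈ List.ofFn fun l : Fin L => decide (hs l.rev = hs0 l.rev) := by
          rw [List.mem_ofFn]
          exact ⟨l.rev, by simp⟩
        have := List.all_eq_true.mp hall _ hmem
        simpa using this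
    have i0 : Fin n := ⟨0, h0⟩
    have heval := congrFun (congrFun (hEU n (Stmt17Aux.X0e n)) ⟨0, h0⟩) 0
    rw [Matrix.sum_apply, Matrix.sum_apply] at heval
    have hL : ∀ hs : Fin L → Fin H,
        ((∏ l, WV l (hs l) * WO l (hs l)) • (aPathRev (A n) hs * Stmt17Aux.X0e n))
            (⟨0, h0⟩ : Fin n) 0
          = (if hs = hs0 then (∏ l, WV l (hs l) * WO l (hs l)) else 0) := by
      intro hs
      rw [hpath hs]
      by_cases hh : hs = hs0 <;>
        simp [hh, Stmt17Aux.X0e, Matrix.smul_apply]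
    have hR : ∀ hs : Fin L → Fin H,
        ((aPathRev (A n) hs * Stmt17Aux.X0e n) * (E * rPathProd RV hs * U))
            (⟨0, h0⟩ : Fin n) 0
          = (if hs = hs0 then (E * rPathProd RV hs * U) 0 0 else 0) := by
      intro hs
      rw [hpath hs, Matrix.smul_mul]
      by_cases hh : hs = hs0 <;>
        simp [hh, Stmt17Aux.X0e, Matrix.smul_apply, Matrix.mul_apply]
    rw [Finset.sum_congr rfl (fun hs _ => hL hs),
      Finset.sum_congr rfl (fun hs _ => hR hs),
      Finset.sum_ite_eq' Finset.univ hs0, Finset.sum_ite_eq' Finset.univ hs0] at heval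
    simpa using heval
  -- Step 2: basis vectors are realizable
  have basis : ∀ hs0 : Fin L → Fin H, ∃ M : Matrix (Fin m) (Fin m) ℝ,
      ∀ hs, (∑ i, ∑ j, rPathProd RV hs i j * M i j) = (if hs = hs0 then (1:ℝ) else 0) := by
    intro hs0
    obtain ⟨E, U, hEU⟩ := key (fun l h => if h = hs0 l then 1 else 0) (fun _ _ => 1)
    refine ⟨fun i j => E 0 i * U j 0, fun hs => ?_⟩
    have h1 : (∏ l, (if hs l = hs0 l then (1:ℝ) else 0) * 1)
        = (if hs = hs0 then (1:ℝ) else 0) := by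
      by_cases hh : hs = hs0
      · subst hh; simp
      · rw [if_neg hh]
        obtain ⟨l, hl⟩ : ∃ l, hs l ≠ hs0 l := by
          by_contra hc; push_neg at hc; exact hh (funext hc)
        exact Finset.prod_eq_zero (Finset.mem_univ l) (by simp [hl])
    have h2 : (E * rPathProd RV hs * U) 0 0
        = ∑ i, ∑ j, rPathProd RV hs i j * (E 0 i * U j 0) := by
      simp only [Matrix.mul_apply, Finset.sum_mul]
      rw [Finset.sum_comm]
      exact Finset.sum_congr rfl fun i _ => Finset.sum_congr rfl fun j _ => by ring
    rw [← h2, ← hEU hs, h1]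
  choose Mb hMb using basis
  -- Step 3: surjectivity and dimension count
  let φ : Matrix (Fin m) (Fin m) ℝ →ₗ[ℝ] ((Fin L → Fin H) → ℝ) :=
    { toFun := fun M hs => ∑ i, ∑ j, rPathProd RV hs i j * M i j
      map_add' := by
        intro M N; funext hs
        simp [Matrix.add_apply, mul_add, Finset.sum_add_distrib]
      map_smul' := by
        intro c M; funext hs
        simp [Matrix.smul_apply, smul_eq_mul, Finset.mul_sum, mul_left_comm] }
  have hφ : ∀ hs0 hs, φ (Mb hs0) hs = (if hs = hs0 then (1:ℝ) else 0) :=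
    fun hs0 hs => hMb hs0 hs
  have hsurj : Function.Surjective φ := by
    intro c
    refine ⟨∑ hs0, c hs0 • Mb hs0, ?_⟩
    have h3 : φ (∑ hs0, c hs0 • Mb hs0) = ∑ hs0, c hs0 • φ (Mb hs0) := by
      rw [map_sum]
      exact Finset.sum_congr rfl fun hs0 _ => map_smul φ _ _
    rw [h3]
    funext hs
    rw [Finset.sum_apply]
    simp only [Pi.smul_apply, smul_eq_mul, hφ, mul_ite, mul_one, mul_zero]
    rw [Finset.sum_ite_eq Finset.univ hs c]
    simp
  have hrank : Fintype.card (Fin L → Fin H) ≤ m * m := by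
    have h1 := LinearMap.finrank_range_le φ
    rw [LinearMap.range_eq_top.mpr hsurj, finrank_top,
      Module.finrank_fintype_fun_eq_card, Module.finrank_matrix] at h1
    simpa using h1
  have hcard : H ^ L ≤ m * m := by
    have h4 : Fintype.card (Fin L → Fin H) = H ^ L := by
      simp [Fintype.card_fun]
    exact h4 ▸ hrank
  have hsq : ((H:ℝ) ^ ((L:ℝ)/2)) ^ 2 ≤ (m:ℝ) ^ 2 := by
    have hexp : (L:ℝ)/2 * ((2:ℕ):ℝ) = ((L:ℕ):ℝ) := by push_cast; ring
    have he1 : ((H:ℝ) ^ ((L:ℝ)/2)) ^ (2:ℕ) = (H:ℝ) ^ (L:ℕ) := by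
      rw [← Real.rpow_natCast ((H:ℝ) ^ ((L:ℝ)/2)) 2, ← Real.rpow_mul hH0, hexp,
        Real.rpow_natCast]
    rw [he1]
    calc (H:ℝ) ^ (L:ℕ) = ((H ^ L : ℕ) : ℝ) := by push_cast; ring
      _ ≤ ((m * m : ℕ) : ℝ) := by exact_mod_cast hcard
      _ = (m:ℝ) ^ 2 := by push_cast; ring
  exact le_of_pow_le_pow_left₀ two_ne_zero hm0 hsq
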